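/- Lower bound for best-arm identification: There exists an absolute constant c > 0 with the following property. For every number of arms K ≥ 2, every ε ∈ (0, 1/2), every time horizon T ≤ cK/ε², and every deterministic bandit algorithm with prediction (A, y), there exist at least ⌈K/3⌉ arms a ∈ [K] such that, under problem instance I_a(ε), the probability that the algorithm's prediction equals a is less than 3/4, i.e., Pr[y(r_1,...,r_T) = a] < 3/4. -/

import Mathlib

/-- The probability that a deterministic bandit algorithm `A` (with 0/1 rewards and `K` arms),
run on the mean-reward vector `μ`, observes the reward sequence `r : Fin T → Bool`:
conditionally on the first `t-1` rewards, the reward in round `t` equals `1` with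
probability `μ a_t`, where `a_t = A t (prefix of r)`. -/
noncomputable def seqProb {K T : ℕ} (A : (t : Fin T) → (Fin t.1 → Bool) → Fin K)
    (μ : Fin K → ℝ) (r : Fin T → Bool) : ℝ :=
  ∏ t : Fin T,
    if r t then μ (A t fun s => r ⟨s.1, s.2.trans t.2⟩)
    else 1 - μ (A t fun s => r ⟨s.1, s.2.trans t.2⟩)

/-- Problem instance `I_j(ε)`: arm `j` has mean reward `(1+ε)/2`, all other arms `1/2`. -/
noncomputable def instMu (K : ℕ) (j : Fin K) (ε : ℝ) : Fin K → ℝ :=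
  fun i => if i = j then (1 + ε) / 2 else 1 / 2

namespace BAI

/-- Product of per-round weights depending on the chosen arm and the observed reward. -/
noncomputable def roundProd {K T : ℕ} (A : (t : Fin T) → (Fin t.1 → Bool) → Fin K)
    (g : Fin K → Bool → ℝ) (r : Fin T → Bool) : ℝ :=
  ∏ t : Fin T, g (A t fun s => r ⟨s.1, s.2.trans t.2⟩) (r t)

/-- Number of rounds in which arm `a` is pulled. -/
def pullCount {K T : ℕ} (A : (t : Fin T) → (Fin t.1 → Bool) → Fin K) (a : Fin K)
    (r : Fin T → Bool) : ℕ :=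
  (Finset.univ.filter fun t : Fin T =>
    A t (fun s => r ⟨s.1, s.2.trans t.2⟩) = a).card

lemma seqProb_eq_roundProd {K T : ℕ} (A : (t : Fin T) → (Fin t.1 → Bool) → Fin K)
    (μ : Fin K → ℝ) (r : Fin T → Bool) :
    seqProb A μ r = roundProd A (fun k b => if b then μ k else 1 - μ k) r := rfl

lemma roundProd_cons {K T : ℕ} (A : (t : Fin (T+1)) → (Fin t.1 → Bool) → Fin K)
    (g : Fin K → Bool → ℝ) (b : Bool) (r : Fin T → Bool) :
    roundProd A g (Fin.cons b r) =
      g (A 0 (fun _ => b)) b *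
        roundProd (fun t p => A t.succ (Fin.cons b p)) g r := by
  unfold roundProd
  rw [Fin.prod_univ_succ]
  congr 1
  · have h0 : (fun s : Fin ((0 : Fin (T+1)).1) =>
        Fin.cons (α := fun _ : Fin (T+1) => Bool) b r ⟨s.1, s.2.trans (0 : Fin (T+1)).2⟩)
        = (fun _ => b) := by
      funext s
      exact absurd s.2 (by simp)
    rw [h0]
    simp
  · apply Finset.prod_congr rfl
    intro t _
    have hpre : (fun s : Fin (t.succ.1) =>
        Fin.cons (α := fun _ : Fin (T+1) => Bool) b r ⟨s.1, s.2.trans t.succ.2⟩)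
        = Fin.cons (α := fun _ : Fin (t.1+1) => Bool) b
            (fun s : Fin t.1 => r ⟨s.1, s.2.trans t.2⟩) := by
      funext s
      refine Fin.cases ?_ ?_ s
      · simp
      · intro s'
        have h1 : (⟨(Fin.succ s').1, (Fin.succ s').2.trans t.succ.2⟩ : Fin (T+1))
            = Fin.succ ⟨s'.1, s'.2.trans t.2⟩ := rfl
        rw [h1, Fin.cons_succ, Fin.cons_succ]
    rw [hpre]
    simp

lemma sum_roundProd {K : ℕ} (g : Fin K → Bool → ℝ) (hg : ∀ k, g k true + g k false = 1) :
    ∀ (T : ℕ) (A : (t : Fin T) → (Fin t.1 → Bool) → Fin K),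
      ∑ r : Fin T → Bool, roundProd A g r = 1 := by
  intro T
  induction T with
  | zero =>
    intro A
    have h1 : ∀ r : Fin 0 → Bool, roundProd A g r = 1 := by
      intro r; unfold roundProd; simp
    rw [Finset.sum_congr rfl fun r _ => h1 r, Finset.sum_const, Finset.card_univ]
    simp
  | succ T ih =>
    intro A
    have hA0 : ∀ b b' : Bool, A 0 (fun _ => b) = A 0 (fun _ => b') := by
      intro b b'
      congr 1
      funext s
      exact absurd s.2 (by simp)
    rw [← Equiv.sum_comp (Fin.consEquiv fun _ : Fin (T+1) => Bool) (roundProd A g),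
      Fintype.sum_prod_type]
    have hval : ∀ (b : Bool) (r : Fin T → Bool),
        roundProd A g ((Fin.consEquiv fun _ : Fin (T+1) => Bool) (b, r)) =
          g (A 0 (fun _ => b)) b * roundProd (fun t p => A t.succ (Fin.cons b p)) g r := by
      intro b r
      have h1 : (Fin.consEquiv fun _ : Fin (T+1) => Bool) (b, r) = Fin.cons b r := rfl
      rw [h1, roundProd_cons]
    calc ∑ b : Bool, ∑ r : Fin T → Bool,
            roundProd A g ((Fin.consEquiv fun _ : Fin (T+1) => Bool) (b, r))
        = ∑ b : Bool, ∑ r : Fin T → Bool,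
            g (A 0 (fun _ => b)) b * roundProd (fun t p => A t.succ (Fin.cons b p)) g r := by
          apply Finset.sum_congr rfl; intro b _
          exact Finset.sum_congr rfl fun r _ => hval b r
      _ = ∑ b : Bool, g (A 0 (fun _ => b)) b * 1 := by
          apply Finset.sum_congr rfl; intro b _
          rw [← Finset.mul_sum, ih]
      _ = 1 := by
          rw [Fintype.sum_bool, mul_one, mul_one, hA0 true false, hg]

lemma roundProd_mul {K T : ℕ} (A : (t : Fin T) → (Fin t.1 → Bool) → Fin K)
    (g₁ g₂ : Fin K → Bool → ℝ) (r : Fin T → Bool) :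
    roundProd A (fun k b => g₁ k b * g₂ k b) r = roundProd A g₁ r * roundProd A g₂ r := by
  unfold roundProd; rw [← Finset.prod_mul_distrib]

lemma roundProd_nonneg {K T : ℕ} (A : (t : Fin T) → (Fin t.1 → Bool) → Fin K)
    {g : Fin K → Bool → ℝ} (hg : ∀ k b, 0 ≤ g k b) (r : Fin T → Bool) :
    0 ≤ roundProd A g r :=
  Finset.prod_nonneg fun t _ => hg _ _

lemma roundProd_pos {K T : ℕ} (A : (t : Fin T) → (Fin t.1 → Bool) → Fin K)
    {g : Fin K → Bool → ℝ} (hg : ∀ k b, 0 < g k b) (r : Fin T → Bool) :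
    0 < roundProd A g r :=
  Finset.prod_pos fun t _ => hg _ _

lemma roundProd_const {K T : ℕ} (A : (t : Fin T) → (Fin t.1 → Bool) → Fin K)
    (c : ℝ) (r : Fin T → Bool) :
    roundProd A (fun _ _ => c) r = c ^ T := by
  unfold roundProd
  rw [Finset.prod_const, Finset.card_univ, Fintype.card_fin]

lemma card_seq (T : ℕ) : (Finset.univ : Finset (Fin T → Bool)).card = 2 ^ T := by
  rw [Finset.card_univ]
  simp [Fintype.card_fun]

lemma sum_const_half (T : ℕ) : ∑ _r : Fin T → Bool, ((2:ℝ)⁻¹) ^ T = 1 := by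
  rw [Finset.sum_const, card_seq, nsmul_eq_mul]
  push_cast
  rw [← mul_pow]
  norm_num

/-- Flipping bit `t` : the prefix before `t` is unchanged, so we can average over `r t`. -/
lemma flip_sum {T : ℕ} (t : Fin T) (h : (Fin t.1 → Bool) → Bool → ℝ) :
    ∑ r : Fin T → Bool, h (fun s => r ⟨s.1, s.2.trans t.2⟩) (r t)
      = (1/2) * ∑ r : Fin T → Bool,
          (h (fun s => r ⟨s.1, s.2.trans t.2⟩) true
            + h (fun s => r ⟨s.1, s.2.trans t.2⟩) false) := by
  have einv : Function.Involutive
      (fun r : Fin T → Bool => Function.update r t (!r t)) := by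
    intro r
    funext x
    by_cases hx : x = t
    · subst hx; simp
    · simp [Function.update_of_ne hx]
  set F : (Fin T → Bool) → ℝ := fun r => h (fun s => r ⟨s.1, s.2.trans t.2⟩) (r t) with hF
  have hpre : ∀ r : Fin T → Bool,
      (fun s : Fin t.1 => Function.update r t (!r t) ⟨s.1, s.2.trans t.2⟩)
        = fun s : Fin t.1 => r ⟨s.1, s.2.trans t.2⟩ := by
    intro r
    funext s
    apply Function.update_of_ne
    intro hh
    exact absurd (congrArg Fin.val hh) (Nat.ne_of_lt s.2)
  have hFe : ∀ r : Fin T → Bool, F (Function.update r t (!r t))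
      = h (fun s => r ⟨s.1, s.2.trans t.2⟩) (!r t) := by
    intro r
    rw [hF]
    simp only [hpre r]
    congr 1
    simp
  have hsum : ∑ r : Fin T → Bool, F r
      = ∑ r : Fin T → Bool, F (Function.update r t (!r t)) :=
    (Equiv.sum_comp einv.toPerm F).symm
  have h2 : (2:ℝ) * ∑ r : Fin T → Bool, F r
      = ∑ r : Fin T → Bool,
          (h (fun s => r ⟨s.1, s.2.trans t.2⟩) true
            + h (fun s => r ⟨s.1, s.2.trans t.2⟩) false) := by
    rw [two_mul]
    nth_rewrite 2 [hsum]
    rw [← Finset.sum_add_distrib]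
    apply Finset.sum_congr rfl
    intro r _
    rw [hFe r, hF]
    cases hb : r t <;> simp [hb] <;> ring
  linarith [h2]


section ArmBound

variable {K T : ℕ}

/-- The likelihood-ratio weight for the instance of arm `a` (square-root form). -/
noncomputable def gL (K : ℕ) (a : Fin K) (ε : ℝ) : Fin K → Bool → ℝ :=
  fun k b => if k = a then (if b then Real.sqrt (1+ε) else Real.sqrt (1-ε)) else 1

noncomputable def gP (K : ℕ) (a : Fin K) (ε : ℝ) : Fin K → Bool → ℝ :=
  fun k b => if b then instMu K a ε k else 1 - instMu K a ε k

lemma gP_nonneg {a : Fin K} {ε : ℝ} (hε0 : 0 < ε) (hε1 : ε < 1) (k : Fin K) (b : Bool) :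
    0 ≤ gP K a ε k b := by
  unfold gP instMu
  cases b <;> by_cases hk : k = a <;> simp [hk] <;> linarith

lemma gP_sum {a : Fin K} {ε : ℝ} (k : Fin K) : gP K a ε k true + gP K a ε k false = 1 := by
  unfold gP; simp

lemma gL_pos {a : Fin K} {ε : ℝ} (hε0 : 0 < ε) (hε1 : ε < 1) (k : Fin K) (b : Bool) :
    0 < gL K a ε k b := by
  unfold gL
  by_cases hk : k = a
  · cases b
    · rw [if_pos hk, if_neg (by simp)]
      exact Real.sqrt_pos.2 (by linarith)
    · rw [if_pos hk, if_pos rfl]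
      exact Real.sqrt_pos.2 (by linarith)
  · rw [if_neg hk]; norm_num

lemma gLsq (a : Fin K) {ε : ℝ} (hε0 : 0 < ε) (hε1 : ε < 1) (k : Fin K) (b : Bool) :
    (2⁻¹ * gL K a ε k b) * (2⁻¹ * gL K a ε k b) = gP K a ε k b * 2⁻¹ := by
  have hp := Real.mul_self_sqrt (show (0:ℝ) ≤ 1 + ε by linarith)
  have hm := Real.mul_self_sqrt (show (0:ℝ) ≤ 1 - ε by linarith)
  unfold gL gP instMu
  by_cases hk : k = a <;> cases b <;> simp [hk]
  · linear_combination (2⁻¹ * 2⁻¹ : ℝ) * hm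
  · linear_combination (2⁻¹ * 2⁻¹ : ℝ) * hp
  · norm_num

set_option maxHeartbeats 1000000 in
/-- The central estimate: the prediction probability under instance `a` exceeds that
under the uniform instance by at most `√((8/3) ε² E_u[N_a])`. -/
lemma arm_bound (A : (t : Fin T) → (Fin t.1 → Bool) → Fin K)
    (y : (Fin T → Bool) → Fin K) {ε : ℝ} (hε0 : 0 < ε) (hε1 : ε < 1/2) (a : Fin K) :
    ∑ r ∈ Finset.univ.filter (fun r : Fin T → Bool => y r = a),
        seqProb A (instMu K a ε) r
      ≤ (∑ _r ∈ Finset.univ.filter (fun r : Fin T → Bool => y r = a), ((2:ℝ)⁻¹)^T)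
        + Real.sqrt ((8/3) * (ε^2 *
            (((2:ℝ)⁻¹)^T * ∑ r : Fin T → Bool, (pullCount A a r : ℝ)))) := by
  have hε1' : ε < 1 := by linarith
  have h1p : (0:ℝ) < 1 + ε := by linarith
  have h1m : (0:ℝ) < 1 - ε := by linarith
  set U : ℝ := ((2:ℝ)⁻¹)^T with hU
  have hU_nn : 0 ≤ U := by positivity
  set P : (Fin T → Bool) → ℝ := fun r => roundProd A (gP K a ε) r with hPdef
  set L : (Fin T → Bool) → ℝ := fun r => roundProd A (gL K a ε) r with hLdef
  have hseq : ∀ r, seqProb A (instMu K a ε) r = P r := fun r =>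
    seqProb_eq_roundProd A (instMu K a ε) r
  have hPnn : ∀ r, 0 ≤ P r := fun r => roundProd_nonneg A (gP_nonneg hε0 hε1') r
  have hP1 : ∑ r : Fin T → Bool, P r = 1 := sum_roundProd (gP K a ε) gP_sum T A
  have hLpos : ∀ r, 0 < L r := fun r => roundProd_pos A (gL_pos hε0 hε1') r
  have hUsum : ∑ _r : Fin T → Bool, U = 1 := sum_const_half T
  -- the affinity-type identity: √(P r) √U = U * L r
  have hS : ∀ r, Real.sqrt (P r) * Real.sqrt U = U * L r := by
    intro r
    have hUL : U * L r = roundProd A (fun k b => 2⁻¹ * gL K a ε k b) r := by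
      rw [roundProd_mul A (fun _ _ => (2:ℝ)⁻¹) (gL K a ε) r, roundProd_const]
    have hULnn : 0 ≤ U * L r := mul_nonneg hU_nn (hLpos r).le
    have hsq : (U * L r) * (U * L r) = P r * U := by
      rw [hUL, ← roundProd_mul]
      have : (fun k b => (2⁻¹ * gL K a ε k b) * (2⁻¹ * gL K a ε k b))
          = (fun k b => gP K a ε k b * 2⁻¹) := by
        funext k b; exact gLsq a hε0 hε1' k b
      rw [this, roundProd_mul A (gP K a ε) (fun _ _ => (2:ℝ)⁻¹) r, roundProd_const]
    rw [← Real.sqrt_mul (hPnn r) U, ← hsq, Real.sqrt_mul_self hULnn]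
  set A0 : ℝ := ∑ r : Fin T → Bool, U * L r with hA0def
  have hA0nn : 0 ≤ A0 :=
    Finset.sum_nonneg fun r _ => mul_nonneg hU_nn (hLpos r).le
  have hA0sq : A0 ^ 2 ≤ 1 := by
    have hcs := Finset.sum_mul_sq_le_sq_mul_sq Finset.univ
      (fun r : Fin T → Bool => Real.sqrt (P r)) (fun _r => Real.sqrt U)
    have e1 : ∑ r : Fin T → Bool, Real.sqrt (P r) * Real.sqrt U = A0 :=
      Finset.sum_congr rfl fun r _ => hS r
    have e2 : ∑ r : Fin T → Bool, Real.sqrt (P r) ^ 2 = 1 := by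
      rw [Finset.sum_congr rfl fun r _ => Real.sq_sqrt (hPnn r), hP1]
    have e3 : ∑ _r : Fin T → Bool, Real.sqrt U ^ 2 = 1 := by
      rw [Finset.sum_congr rfl fun (r : Fin T → Bool) _ => Real.sq_sqrt hU_nn, hUsum]
    rw [e1, e2, e3] at hcs
    linarith
  have hA0le1 : A0 ≤ 1 := by nlinarith
  -- log-sum computation
  set Q : ℝ := U * ∑ r : Fin T → Bool, (pullCount A a r : ℝ) with hQdef
  have hQnn : 0 ≤ Q := by
    apply mul_nonneg hU_nn
    exact Finset.sum_nonneg fun r _ => Nat.cast_nonneg _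
  set m : ℝ := U * ∑ r : Fin T → Bool, Real.log (L r) with hmdef
  have hsumlog : ∑ r : Fin T → Bool, Real.log (L r)
      = (Real.log (1 - ε^2) / 4) * ∑ r : Fin T → Bool, (pullCount A a r : ℝ) := by
    have hlogL : ∀ r, Real.log (L r)
        = ∑ t : Fin T, Real.log (gL K a ε (A t fun s => r ⟨s.1, s.2.trans t.2⟩) (r t)) := by
      intro r
      exact Real.log_prod fun t _ => (gL_pos hε0 hε1' _ _).ne'
    rw [Finset.sum_congr rfl fun r _ => hlogL r, Finset.sum_comm]
    have hc1 : Real.log (Real.sqrt (1+ε)) + Real.log (Real.sqrt (1-ε))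
        = Real.log (1 - ε^2) / 2 := by
      rw [Real.log_sqrt h1p.le, Real.log_sqrt h1m.le, ← add_div,
        ← Real.log_mul h1p.ne' h1m.ne']
      ring_nf
    have hperround : ∀ t : Fin T,
        ∑ r : Fin T → Bool, Real.log (gL K a ε (A t fun s => r ⟨s.1, s.2.trans t.2⟩) (r t))
          = (Real.log (1 - ε^2) / 4)
              * ∑ r : Fin T → Bool,
                  (if A t (fun s => r ⟨s.1, s.2.trans t.2⟩) = a then (1:ℝ) else 0) := by
      intro t
      rw [flip_sum t (fun p b => Real.log (gL K a ε (A t p) b))]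
      rw [Finset.mul_sum, Finset.mul_sum]
      apply Finset.sum_congr rfl
      intro r _
      by_cases hk : A t (fun s => r ⟨s.1, s.2.trans t.2⟩) = a
      · rw [if_pos hk, hk]
        simp only [gL, if_pos rfl]
        simp only [if_true, Bool.false_eq_true, if_false]
        linarith [hc1]
      · rw [if_neg hk]
        simp [gL, hk]
    rw [Finset.sum_congr rfl fun t _ => hperround t, ← Finset.mul_sum, Finset.sum_comm]
    congr 1
    apply Finset.sum_congr rfl
    intro r _
    unfold pullCount
    rw [Finset.card_filter]
    push_cast
    rfl
  have hlog_ge : -(4/3) * ε^2 ≤ Real.log (1 - ε^2) := by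
    have hpos : (0:ℝ) < 1 - ε^2 := by nlinarith
    have hinv : (0:ℝ) < (1 - ε^2)⁻¹ := inv_pos.2 hpos
    have hl := Real.log_le_sub_one_of_pos hinv
    rw [Real.log_inv] at hl
    have heq : (1 - ε^2)⁻¹ - 1 = ε^2 / (1 - ε^2) := by field_simp; ring
    have hb : ε^2 / (1 - ε^2) ≤ (4/3) * ε^2 := by
      rw [div_le_iff₀ hpos]
      nlinarith [hε0, hε1, sq_nonneg ε, mul_pos hε0 hε0,
        mul_lt_mul_of_pos_left hε1 hε0]
    linarith
  have hm : m = (Real.log (1 - ε^2) / 4) * Q := by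
    rw [hmdef, hsumlog, hQdef]; ring
  have hm_ge : -(ε^2/3) * Q ≤ m := by
    rw [hm]
    have : -(ε^2/3) = (-(4/3) * ε^2) / 4 := by ring
    rw [this]
    apply mul_le_mul_of_nonneg_right _ hQnn
    linarith
  -- A0 ≥ exp m ≥ 1 + m
  have hA0ge : Real.exp m ≤ A0 := by
    have htan : ∀ r : Fin T → Bool,
        Real.exp m * (Real.log (L r) - m + 1) ≤ L r := by
      intro r
      have h1 := Real.add_one_le_exp (Real.log (L r) - m)
      have h2 := mul_le_mul_of_nonneg_left h1 (Real.exp_nonneg m)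
      calc Real.exp m * (Real.log (L r) - m + 1)
          ≤ Real.exp m * Real.exp (Real.log (L r) - m) := h2
        _ = Real.exp (Real.log (L r)) := by rw [← Real.exp_add]; ring_nf
        _ = L r := Real.exp_log (hLpos r)
    have hsum_le : ∑ r : Fin T → Bool, U * (Real.exp m * (Real.log (L r) - m + 1))
        ≤ A0 := by
      rw [hA0def]
      exact Finset.sum_le_sum fun r _ => mul_le_mul_of_nonneg_left (htan r) hU_nn
    have hval : ∑ r : Fin T → Bool, U * (Real.exp m * (Real.log (L r) - m + 1))
        = Real.exp m := by
      have hexpand : ∀ r : Fin T → Bool,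
          U * (Real.exp m * (Real.log (L r) - m + 1))
            = Real.exp m * (U * Real.log (L r)) + Real.exp m * (1 - m) * U := by
        intro r; ring
      rw [Finset.sum_congr rfl fun r _ => hexpand r, Finset.sum_add_distrib,
        Finset.sum_const, ← Finset.mul_sum, ← Finset.mul_sum, ← hmdef, card_seq,
        nsmul_eq_mul]
      have h2T : ((2^T : ℕ) : ℝ) * U = 1 := by
        rw [hU]
        push_cast
        rw [← mul_pow]
        norm_num
      have h2T' : ((2^T : ℕ) : ℝ) * (Real.exp m * (1 - m) * U)
          = Real.exp m * (1 - m) := by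
        rw [show ((2^T : ℕ) : ℝ) * (Real.exp m * (1 - m) * U)
            = (((2^T : ℕ) : ℝ) * U) * (Real.exp m * (1 - m)) by ring, h2T, one_mul]
      rw [h2T']
      ring
    linarith
  have hA0_lb : 1 - (ε^2/3) * Q ≤ A0 := by
    have := Real.add_one_le_exp m
    nlinarith
  -- total variation bound
  set D : ℝ := ∑ r : Fin T → Bool, |P r - U| with hDdef
  have hDnn : 0 ≤ D := Finset.sum_nonneg fun r _ => abs_nonneg _
  have hD2 : D^2 ≤ (8/3) * (ε^2 * Q) := by
    have habs : ∀ r, |P r - U| = |Real.sqrt (P r) - Real.sqrt U|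
        * (Real.sqrt (P r) + Real.sqrt U) := by
      intro r
      have e1 : Real.sqrt (P r) ^ 2 = P r := Real.sq_sqrt (hPnn r)
      have e2 : Real.sqrt U ^ 2 = U := Real.sq_sqrt hU_nn
      have e3 : P r - U = (Real.sqrt (P r) - Real.sqrt U)
          * (Real.sqrt (P r) + Real.sqrt U) := by linear_combination e2 - e1
      rw [e3, abs_mul, abs_of_nonneg (add_nonneg (Real.sqrt_nonneg (P r)) (Real.sqrt_nonneg U))]
    have hcs := Finset.sum_mul_sq_le_sq_mul_sq Finset.univ
      (fun r : Fin T → Bool => |Real.sqrt (P r) - Real.sqrt U|)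
      (fun r : Fin T → Bool => Real.sqrt (P r) + Real.sqrt U)
    have hDeq : D = ∑ r : Fin T → Bool,
        |Real.sqrt (P r) - Real.sqrt U| * (Real.sqrt (P r) + Real.sqrt U) :=
      Finset.sum_congr rfl fun r _ => habs r
    have hminus : ∑ r : Fin T → Bool, |Real.sqrt (P r) - Real.sqrt U| ^ 2
        = 2 - 2 * A0 := by
      have hterm : ∀ r : Fin T → Bool, |Real.sqrt (P r) - Real.sqrt U| ^ 2
          = P r - 2 * (Real.sqrt (P r) * Real.sqrt U) + U := by
        intro r
        rw [sq_abs]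
        have e1 : Real.sqrt (P r) ^ 2 = P r := Real.sq_sqrt (hPnn r)
        have e2 : Real.sqrt U ^ 2 = U := Real.sq_sqrt hU_nn
        linear_combination e1 + e2
      rw [Finset.sum_congr rfl fun r _ => hterm r]
      rw [Finset.sum_add_distrib, Finset.sum_sub_distrib, hP1, hUsum, ← Finset.mul_sum,
        Finset.sum_congr rfl fun r _ => hS r, ← hA0def]
      ring
    have hplus : ∑ r : Fin T → Bool, (Real.sqrt (P r) + Real.sqrt U) ^ 2
        = 2 + 2 * A0 := by
      have hterm : ∀ r : Fin T → Bool, (Real.sqrt (P r) + Real.sqrt U) ^ 2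
          = P r + 2 * (Real.sqrt (P r) * Real.sqrt U) + U := by
        intro r
        have e1 : Real.sqrt (P r) ^ 2 = P r := Real.sq_sqrt (hPnn r)
        have e2 : Real.sqrt U ^ 2 = U := Real.sq_sqrt hU_nn
        linear_combination e1 + e2
      rw [Finset.sum_congr rfl fun r _ => hterm r]
      rw [Finset.sum_add_distrib, Finset.sum_add_distrib, hP1, hUsum, ← Finset.mul_sum,
        Finset.sum_congr rfl fun r _ => hS r, ← hA0def]
      ring
    rw [← hDeq] at hcs
    rw [hminus, hplus] at hcs
    have h8 : (2 - 2*A0) * (2 + 2*A0) ≤ 8 * (1 - A0) := by nlinarith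
    have h13 : 8 * (1 - A0) ≤ (8/3) * (ε^2 * Q) := by nlinarith
    linarith
  have hD_le : D ≤ Real.sqrt ((8/3) * (ε^2 * Q)) := by
    have := Real.sqrt_le_sqrt hD2
    rwa [Real.sqrt_sq hDnn] at this
  -- assemble
  have hfilter : ∑ r ∈ Finset.univ.filter (fun r : Fin T → Bool => y r = a), P r
      ≤ (∑ _r ∈ Finset.univ.filter (fun r : Fin T → Bool => y r = a), U) + D := by
    have h1 : ∑ r ∈ Finset.univ.filter (fun r : Fin T → Bool => y r = a), (P r - U)
        ≤ ∑ r ∈ Finset.univ.filter (fun r : Fin T → Bool => y r = a), |P r - U| :=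
      Finset.sum_le_sum fun r _ => le_abs_self _
    have h2 : ∑ r ∈ Finset.univ.filter (fun r : Fin T → Bool => y r = a), |P r - U| ≤ D := by
      rw [hDdef]
      exact Finset.sum_le_sum_of_subset_of_nonneg (Finset.filter_subset _ _)
        fun r _ _ => abs_nonneg _
    rw [Finset.sum_sub_distrib] at h1
    linarith
  rw [Finset.sum_congr rfl fun r _ => hseq r]
  calc ∑ r ∈ Finset.univ.filter (fun r : Fin T → Bool => y r = a), P r
      ≤ (∑ _r ∈ Finset.univ.filter (fun r : Fin T → Bool => y r = a), U) + D := hfilter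
    _ ≤ _ := by
        rw [hU, hQdef] at *
        exact add_le_add le_rfl hD_le

end ArmBound

end BAI

/-- **Lower bound for best-arm identification.**
There is an absolute constant `c > 0` such that for every `K ≥ 2`, `ε ∈ (0,1/2)`,
time horizon `T ≤ cK/ε²`, and deterministic bandit algorithm with prediction `(A, y)`,
there exist at least `⌈K/3⌉` arms `a` such that, under instance `I_a(ε)`,
`Pr[y(r₁,…,r_T) = a] < 3/4`. -/
theorem bestarm_identification_lower_bound :
    ∃ c > (0 : ℝ), ∀ (K T : ℕ), 2 ≤ K → ∀ ε : ℝ, 0 < ε → ε < 1 / 2 →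
      (T : ℝ) ≤ c * K / ε ^ 2 →
      ∀ (A : (t : Fin T) → (Fin t.1 → Bool) → Fin K) (y : (Fin T → Bool) → Fin K),
        ∃ S : Finset (Fin K), ⌈(K : ℝ) / 3⌉₊ ≤ S.card ∧
          ∀ a ∈ S,
            (∑ r ∈ Finset.univ.filter (fun r : Fin T → Bool => y r = a),
              seqProb A (instMu K a ε) r) < 3 / 4 := by
  refine ⟨1/200, by norm_num, ?_⟩
  intro K T hK ε hε0 hε2 hT A y
  have hK2 : (2:ℝ) ≤ K := by exact_mod_cast hK
  have hK0 : (0:ℝ) < K := by linarith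
  set U : ℝ := ((2:ℝ)⁻¹)^T with hU
  have hU_nn : 0 ≤ U := by positivity
  set p : Fin K → ℝ :=
    fun a => ∑ _r ∈ Finset.univ.filter (fun r : Fin T → Bool => y r = a), U with hp
  set q : Fin K → ℝ :=
    fun a => U * ∑ r : Fin T → Bool, (BAI.pullCount A a r : ℝ) with hq
  have hp_nn : ∀ a, 0 ≤ p a := fun a => Finset.sum_nonneg fun _ _ => hU_nn
  have hq_nn : ∀ a, 0 ≤ q a := fun a =>
    mul_nonneg hU_nn (Finset.sum_nonneg fun _ _ => Nat.cast_nonneg _)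
  have hp_sum : ∑ a : Fin K, p a = 1 := by
    simp only [hp]
    rw [Finset.sum_fiberwise_of_maps_to (fun r _ => Finset.mem_univ (y r)) (fun _ => U)]
    exact BAI.sum_const_half T
  have hq_sum : ∑ a : Fin K, q a = T := by
    simp only [hq]
    rw [← Finset.mul_sum, Finset.sum_comm]
    have hpc : ∀ r : Fin T → Bool, ∑ a : Fin K, (BAI.pullCount A a r : ℝ) = T := by
      intro r
      have hnat : ∑ a : Fin K, BAI.pullCount A a r = T := by
        unfold BAI.pullCount
        rw [← Finset.card_eq_sum_card_fiberwise (fun t _ => Finset.mem_univ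
          (A t fun s => r ⟨s.1, s.2.trans t.2⟩))]
        rw [Finset.card_univ, Fintype.card_fin]
      rw [show ∑ a : Fin K, (BAI.pullCount A a r : ℝ)
          = ((∑ a : Fin K, BAI.pullCount A a r : ℕ) : ℝ) by push_cast; rfl, hnat]
    rw [Finset.sum_congr rfl fun r _ => hpc r, Finset.sum_const, BAI.card_seq, nsmul_eq_mul]
    rw [hU, show (2:ℝ)⁻¹^T * (((2^T : ℕ) : ℝ) * (T:ℝ))
        = ((2:ℝ)⁻¹ * 2)^T * (T:ℝ) by push_cast; rw [mul_pow]; ring]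
    norm_num
  set B1 : Finset (Fin K) := Finset.univ.filter (fun a => 1/2 < p a) with hB1def
  set B2 : Finset (Fin K) :=
    Finset.univ.filter (fun a => 3*(T:ℝ)/(K:ℝ) < q a) with hB2def
  have hB1card : B1.card ≤ 1 := by
    rw [Finset.card_le_one]
    intro a ha b hb
    by_contra hab
    have hpa := (Finset.mem_filter.1 ha).2
    have hpb := (Finset.mem_filter.1 hb).2
    have hsub : ∑ x ∈ ({a, b} : Finset (Fin K)), p x ≤ ∑ x : Fin K, p x :=
      Finset.sum_le_sum_of_subset_of_nonneg (Finset.subset_univ _)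
        (fun i _ _ => hp_nn i)
    rw [Finset.sum_pair hab, hp_sum] at hsub
    linarith
  have hB2card : (B2.card : ℝ) < (K:ℝ)/3 := by
    rcases Finset.eq_empty_or_nonempty B2 with h | hne
    · rw [h]
      simp only [Finset.card_empty, Nat.cast_zero]
      linarith
    · have hlt : ∑ _a ∈ B2, 3*(T:ℝ)/(K:ℝ) < ∑ a ∈ B2, q a :=
        Finset.sum_lt_sum_of_nonempty hne (fun a ha => (Finset.mem_filter.1 ha).2)
      rw [Finset.sum_const, nsmul_eq_mul] at hlt
      have hle : ∑ a ∈ B2, q a ≤ (T:ℝ) := by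
        calc ∑ a ∈ B2, q a ≤ ∑ a : Fin K, q a :=
              Finset.sum_le_sum_of_subset_of_nonneg (Finset.subset_univ _)
                (fun i _ _ => hq_nn i)
          _ = T := hq_sum
      by_contra hc
      push_neg at hc
      have h3 : (K:ℝ)/3 * (3*(T:ℝ)/(K:ℝ)) = T := by field_simp
      have h4 : (T:ℝ) ≤ (B2.card : ℝ) * (3*(T:ℝ)/(K:ℝ)) := by
        calc (T:ℝ) = (K:ℝ)/3 * (3*(T:ℝ)/(K:ℝ)) := h3.symm
          _ ≤ (B2.card:ℝ) * (3*(T:ℝ)/(K:ℝ)) := by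
              apply mul_le_mul_of_nonneg_right hc
              positivity
      linarith
  set mm : ℕ := ⌈(K:ℝ)/3⌉₊ with hmm
  have hmm_le : mm ≤ (K + 2)/3 := by
    rw [hmm, Nat.ceil_le]
    have h3 : K ≤ ((K+2)/3) * 3 := by omega
    rw [div_le_iff₀ (by norm_num : (0:ℝ) < 3)]
    exact_mod_cast h3
  have h2m : 2 * mm ≤ K := by omega
  have hB2card' : B2.card < mm := by
    have h1 : (B2.card : ℝ) < (mm : ℝ) :=
      lt_of_lt_of_le hB2card (by rw [hmm]; exact Nat.le_ceil _)
    exact_mod_cast h1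
  refine ⟨Finset.univ \ (B1 ∪ B2), ?_, ?_⟩
  · have hcard : (Finset.univ \ (B1 ∪ B2)).card = K - (B1 ∪ B2).card := by
      rw [Finset.card_sdiff_of_subset (Finset.subset_univ _), Finset.card_univ, Fintype.card_fin]
    have hu : (B1 ∪ B2).card ≤ B1.card + B2.card := Finset.card_union_le _ _
    rw [hcard]
    omega
  · intro a ha
    rw [Finset.mem_sdiff, Finset.mem_union] at ha
    obtain ⟨-, hnot⟩ := ha
    push_neg at hnot
    obtain ⟨h1, h2⟩ := hnot
    have hpa : p a ≤ 1/2 := by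
      by_contra hh
      push_neg at hh
      exact h1 (Finset.mem_filter.2 ⟨Finset.mem_univ _, hh⟩)
    have hqa : q a ≤ 3*(T:ℝ)/(K:ℝ) := by
      by_contra hh
      push_neg at hh
      exact h2 (Finset.mem_filter.2 ⟨Finset.mem_univ _, hh⟩)
    have hbound := BAI.arm_bound A y hε0 hε2 a
    rw [← hU] at hbound
    have hfold1 : (∑ _r ∈ Finset.univ.filter (fun r : Fin T → Bool => y r = a), U)
        = p a := by simp only [hp]
    have hfold2 : U * ∑ r : Fin T → Bool, (BAI.pullCount A a r : ℝ) = q a := by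
      simp only [hq]
    rw [hfold1, hfold2] at hbound
    have hεT : ε^2 * (T:ℝ) ≤ (1/200) * K := by
      have hmul := mul_le_mul_of_nonneg_left hT
        (le_of_lt (by positivity : (0:ℝ) < ε^2))
      calc ε^2 * (T:ℝ) ≤ ε^2 * ((1/200) * K / ε^2) := hmul
        _ = (1/200) * K := by field_simp
    have hq3 : (8:ℝ)/3 * (ε^2 * q a) ≤ 1/25 := by
      have h5 : ε^2 * q a ≤ ε^2 * (3*(T:ℝ)/(K:ℝ)) :=
        mul_le_mul_of_nonneg_left hqa (by positivity)
      have h6 : ε^2 * (3*(T:ℝ)/(K:ℝ)) ≤ 3/200 := by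
        rw [show ε^2 * (3*(T:ℝ)/(K:ℝ)) = 3 * (ε^2 * (T:ℝ)) / K by ring]
        rw [div_le_iff₀ hK0]
        linarith
      linarith
    have hsq : Real.sqrt ((8:ℝ)/3 * (ε^2 * q a)) ≤ 1/5 := by
      have hmono := Real.sqrt_le_sqrt hq3
      rwa [show (1:ℝ)/25 = (1/5)^2 by norm_num,
        Real.sqrt_sq (by norm_num : (0:ℝ) ≤ 1/5)] at hmono
    calc ∑ r ∈ Finset.univ.filter (fun r : Fin T → Bool => y r = a),
          seqProb A (instMu K a ε) r
        ≤ p a + Real.sqrt ((8:ℝ)/3 * (ε^2 * q a)) := hbound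
      _ ≤ 1/2 + 1/5 := add_le_add hpa hsq
      _ < 3/4 := by norm_num
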